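/- arXiv:2102.07158 — 4 statements merged into one kernel-verified Lean document; each statement's English description precedes it below -/
import Mathlib

section
/- Fix x ∈ ℝ^d, suppose ‖a_{ij}‖ ≤ R for all i, j, and let h_{ij} be reals with |h_{ij}| ≤ γ. With β = max_{i,j} (h_{ij}(x) + 2γ)/(h_{ij} + 2γ) and H = (1/(nm)) Σ_{i,j} [ β (h_{ij} + 2γ) − 2γ ] a_{ij} a_{ij}ᵀ, the estimator error is bounded by ‖H − ∇²f(x)‖ ≤ 18 γ R² in operator norm. -/
open MeasureTheory Filter
open scoped BigOperators

noncomputable section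

abbrev Euc (d : ℕ) := EuclideanSpace ℝ (Fin d)

/-- Real inner product on Euclidean space. -/
def rinner {d : ℕ} (a x : Euc d) : ℝ := inner ℝ a x

/-- The rank-one matrix `a aᵀ`. -/
def outerMat {d : ℕ} (a : Euc d) : Matrix (Fin d) (Fin d) ℝ := fun p q => a p * a q

/-- `(1/(nm)) ∑_{ij} c_{ij} a_{ij} a_{ij}ᵀ`. -/
def Hmat {n m d : ℕ} (a : Fin n → Fin m → Euc d) (c : Fin n → Fin m → ℝ) :
    Matrix (Fin d) (Fin d) ℝ :=
  ((n : ℝ) * m)⁻¹ • ∑ i, ∑ j, c i j • outerMat (a i j)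

/-- Matrix-vector multiplication as a map on Euclidean space. -/
def mulVecE {d : ℕ} (M : Matrix (Fin d) (Fin d) ℝ) (v : Euc d) : Euc d := WithLp.toLp 2 (M.mulVec v)

/-- The vector `h_i(y) = (φ''_{i1}(⟨a_{i1},y⟩), …, φ''_{im}(⟨a_{im},y⟩)) ∈ ℝ^m`. -/
def hvecOf {n m d : ℕ} (a : Fin n → Fin m → Euc d) (φ'' : Fin n → Fin m → ℝ → ℝ)
    (i : Fin n) (y : Euc d) : Euc m :=
  WithLp.toLp 2 (fun j => φ'' i j (rinner (a i j) y))

/-- Componentwise positive part on ℝ^m. -/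
def posPartE {m : ℕ} (v : Euc m) : Euc m := WithLp.toLp 2 (fun j => max (v j) 0)


set_option maxHeartbeats 1000000
set_option synthInstance.maxHeartbeats 1000000

lemma outer_clm_norm {d : ℕ} (a : Euc d) :
    ‖Matrix.toEuclideanCLM (𝕜 := ℝ) (outerMat a)‖ ≤ ‖a‖ ^ 2 := by
  refine ContinuousLinearMap.opNorm_le_bound _ (sq_nonneg _) fun v => ?_
  have hv : (Matrix.toEuclideanCLM (𝕜 := ℝ) (outerMat a)) v = (inner ℝ a v : ℝ) • a := by
    ext p
    show (outerMat a).mulVec v p = _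
    simp only [Matrix.mulVec, dotProduct, outerMat, PiLp.smul_apply, smul_eq_mul,
      PiLp.inner_apply, RCLike.inner_apply, conj_trivial]
    rw [Finset.sum_mul]
    exact Finset.sum_congr rfl fun q _ => by ring
  rw [hv, norm_smul]
  have h1 : ‖(inner ℝ a v : ℝ)‖ ≤ ‖a‖ * ‖v‖ := by
    rw [Real.norm_eq_abs]; exact abs_real_inner_le_norm a v
  calc ‖(inner ℝ a v : ℝ)‖ * ‖a‖ ≤ ‖a‖ * ‖v‖ * ‖a‖ :=
        mul_le_mul_of_nonneg_right h1 (norm_nonneg a)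
    _ = ‖a‖ ^ 2 * ‖v‖ := by ring

lemma hmat_clm_norm {n m d : ℕ} (hn : 0 < n) (hm : 0 < m)
    (a : Fin n → Fin m → Euc d) (e : Fin n → Fin m → ℝ) (C R : ℝ) (hC : 0 ≤ C) (hR : 0 ≤ R)
    (he : ∀ i j, |e i j| ≤ C) (hRub : ∀ i j, ‖a i j‖ ≤ R) :
    ‖Matrix.toEuclideanCLM (𝕜 := ℝ) (Hmat a e)‖ ≤ C * R ^ 2 := by
  have hnm : (0:ℝ) < (n : ℝ) * m := by positivity
  have key : Matrix.toEuclideanCLM (𝕜 := ℝ) (Hmat a e)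
      = ((n : ℝ) * m)⁻¹ • ∑ i, ∑ j, e i j • Matrix.toEuclideanCLM (𝕜 := ℝ) (outerMat (a i j)) := by
    simp only [Hmat, _root_.map_smul, map_sum]
  have hterm : ∀ i j, ‖e i j • Matrix.toEuclideanCLM (𝕜 := ℝ) (outerMat (a i j))‖ ≤ C * R ^ 2 := by
    intro i j
    refine le_trans (ContinuousLinearMap.opNorm_smul_le _ _) ?_
    have h2 : ‖Matrix.toEuclideanCLM (𝕜 := ℝ) (outerMat (a i j))‖ ≤ R ^ 2 := by
      refine (outer_clm_norm (a i j)).trans ?_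
      have := hRub i j
      nlinarith [norm_nonneg (a i j)]
    exact mul_le_mul (he i j) h2 (norm_nonneg _) hC
  have hb : ‖∑ i, ∑ j, e i j • Matrix.toEuclideanCLM (𝕜 := ℝ) (outerMat (a i j))‖
      ≤ (n : ℝ) * m * (C * R ^ 2) := by
    refine le_trans (norm_sum_le _ _) ?_
    refine le_trans (Finset.sum_le_sum fun i _ => norm_sum_le _ _) ?_
    refine le_trans (Finset.sum_le_sum fun i _ => Finset.sum_le_sum fun j _ => hterm i j) ?_
    simp [Finset.sum_const, mul_assoc]
  rw [key]
  refine le_trans (ContinuousLinearMap.opNorm_smul_le _ _) ?_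
  rw [Real.norm_eq_abs, abs_of_pos (inv_pos.mpr hnm)]
  calc ((n : ℝ) * m)⁻¹ * ‖∑ i, ∑ j, e i j • Matrix.toEuclideanCLM (𝕜 := ℝ) (outerMat (a i j))‖
      ≤ ((n : ℝ) * m)⁻¹ * ((n : ℝ) * m * (C * R ^ 2)) :=
        mul_le_mul_of_nonneg_left hb (le_of_lt (inv_pos.mpr hnm))
    _ = C * R ^ 2 := by field_simp

lemma Hmat_sub {n m d : ℕ} (a : Fin n → Fin m → Euc d) (c1 c2 : Fin n → Fin m → ℝ) :
    Hmat a c1 - Hmat a c2 = Hmat a (fun i j => c1 i j - c2 i j) := by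
  simp only [Hmat, ← smul_sub, ← Finset.sum_sub_distrib, ← sub_smul]

/-- operator-norm bound on the Hessian estimator error. -/
theorem estimator_error_bound
    {n m d : ℕ} (hn : 0 < n) (hm : 0 < m) (hd : 0 < d)
    (γ R : ℝ) (hγ : 0 < γ) (hR : 0 ≤ R)
    (a : Fin n → Fin m → Euc d) (φ : Fin n → Fin m → ℝ → ℝ)
    (φ'' : Fin n → Fin m → ℝ → ℝ) (hφ'' : ∀ i j, φ'' i j = deriv (deriv (φ i j)))
    (hsmooth : ∀ i j, ContDiff ℝ 2 (φ i j))
    (hbdd : ∀ i j t, |φ'' i j t| ≤ γ)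
    (hRub : ∀ i j, ‖a i j‖ ≤ R)
    (x : Euc d) (c : Fin n → Fin m → ℝ) (hcγ : ∀ i j, |c i j| ≤ γ)
    (β : ℝ)
    (hβub : ∀ i j, (φ'' i j (rinner (a i j) x) + 2 * γ) / (c i j + 2 * γ) ≤ β)
    (hβmem : ∃ i j, β = (φ'' i j (rinner (a i j) x) + 2 * γ) / (c i j + 2 * γ)) :
    ‖Matrix.toEuclideanCLM (𝕜 := ℝ)
        (Hmat a (fun i j => β * (c i j + 2 * γ) - 2 * γ) -
         Hmat a (fun i j => φ'' i j (rinner (a i j) x)))‖ ≤ 18 * γ * R ^ 2 := by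
  have hβ3 : β ≤ 3 := by
    obtain ⟨i, j, hij⟩ := hβmem
    have hc := abs_le.1 (hcγ i j)
    have hh := abs_le.1 (hbdd i j (rinner (a i j) x))
    rw [hij, div_le_iff₀ (by linarith)]
    linarith
  have hβ0 : 0 ≤ β := by
    obtain ⟨i, j, hij⟩ := hβmem
    have hc := abs_le.1 (hcγ i j)
    have hh := abs_le.1 (hbdd i j (rinner (a i j) x))
    refine le_trans (le_of_lt (div_pos ?_ ?_)) (hβub i j) <;> linarith
  rw [Hmat_sub]
  refine hmat_clm_norm hn hm a _ (18 * γ) R (by linarith) hR ?_ hRub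
  intro i j
  have hc := abs_le.1 (hcγ i j)
  have hh := abs_le.1 (hbdd i j (rinner (a i j) x))
  have h1 : β * (c i j + 2 * γ) ≤ 3 * (3 * γ) :=
    mul_le_mul hβ3 (by linarith) (by linarith) (by norm_num)
  have h2 : 0 ≤ β * (c i j + 2 * γ) := mul_nonneg hβ0 (by linarith)
  rw [abs_le]
  constructor <;> linarith
end
end

section
/- (One step of CUBIC-NEWTON-LEARN.) Fix x ∈ ℝ^d and reals h_{ij} with |h_{ij}| ≤ γ for all i ∈ [n], j ∈ [m]. Set M = νR³, β = max_{i,j} (h_{ij}(x) + 2γ)/(h_{ij} + 2γ), H = (1/(nm)) Σ_{i,j} [ β (h_{ij} + 2γ) − 2γ ] a_{ij} a_{ij}ᵀ, and T(x, s) = ⟨∇P(x), s⟩ + (1/2)⟨(H + λI)s, s⟩ + (M/6)‖s‖³. Let s* be a global minimizer of s ↦ T(x, s) and x⁺ = x + s*. Then for every y ∈ ℝ^d: P(x⁺) ≤ P(y) + 9γR² ‖y − x‖² + (M/3) ‖y − x‖³. -/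
open MeasureTheory Filter
open scoped BigOperators

noncomputable section

/-- The cubically regularized model `T(x,s)` built from the Hessian estimator `Hmat a c + λ I`,
gradient `gP` and cubic coefficient `Mc`. -/
def cubicModel {n m d : ℕ} (a : Fin n → Fin m → Euc d) (gP : Euc d)
    (c : Fin n → Fin m → ℝ) (lam Mc : ℝ) (s : Euc d) : ℝ :=
  rinner gP s +
    1 / 2 * rinner (mulVecE (Hmat a c + lam • (1 : Matrix (Fin d) (Fin d) ℝ)) s) s +
    Mc / 6 * ‖s‖ ^ 3

-- === auxiliary lemmas ===

lemma rinner_sum' {d : ℕ} (v s : Euc d) : rinner v s = ∑ p, v p * s p := by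
  simp [rinner, PiLp.inner_apply, RCLike.inner_apply]
  exact Finset.sum_congr rfl fun p _ => mul_comm _ _

lemma outer_quad {d : ℕ} (a s : Euc d) :
    ∑ p, ((outerMat a).mulVec s) p * s p = (rinner a s)^2 := by
  rw [show (∑ p, ((outerMat a).mulVec s) p * s p)
      = rinner (WithLp.toLp 2 ((outerMat a).mulVec s) : Euc d) s from (rinner_sum' (WithLp.toLp 2 ((outerMat a).mulVec s)) s).symm]
  simp only [rinner, PiLp.inner_apply, RCLike.inner_apply', conj_trivial, Matrix.mulVec,
    dotProduct, outerMat, pow_two, Finset.sum_mul_sum]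
  rw [Finset.sum_comm]
  exact Finset.sum_congr rfl fun p _ => by
    rw [Finset.sum_mul]; exact Finset.sum_congr rfl fun q _ => by ring

lemma mulVec_sum' {d : ℕ} {ι : Type*} (F : Finset ι) (M : ι → Matrix (Fin d) (Fin d) ℝ)
    (s : Fin d → ℝ) (p : Fin d) :
    ((∑ k ∈ F, M k).mulVec s) p = ∑ k ∈ F, ((M k).mulVec s) p := by
  simp only [Matrix.mulVec, dotProduct, Matrix.sum_apply, Finset.sum_mul]
  rw [Finset.sum_comm]

lemma mulVec_smul' {d : ℕ} (r : ℝ) (M : Matrix (Fin d) (Fin d) ℝ) (s : Fin d → ℝ) (p : Fin d) :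
    ((r • M).mulVec s) p = r * (M.mulVec s) p := by
  simp only [Matrix.mulVec, dotProduct, Matrix.smul_apply, smul_eq_mul, Finset.mul_sum,
    mul_assoc]

lemma quad_eq {n m d : ℕ} (a : Fin n → Fin m → Euc d) (c' : Fin n → Fin m → ℝ) (lam : ℝ)
    (s : Euc d) :
    rinner (mulVecE (Hmat a c' + lam • (1 : Matrix (Fin d) (Fin d) ℝ)) s) s
      = ((n : ℝ) * m)⁻¹ * (∑ i, ∑ j, c' i j * (rinner (a i j) s)^2) + lam * ‖s‖^2 := by
  rw [rinner_sum']
  have hid : ∀ p, ((lam • (1 : Matrix (Fin d) (Fin d) ℝ)).mulVec s) p = lam * s p := by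
    intro p
    rw [mulVec_smul', Matrix.one_mulVec]
  have hpt : ∀ p : Fin d, (mulVecE (Hmat a c' + lam • (1 : Matrix (Fin d) (Fin d) ℝ)) s) p
      = ((n : ℝ) * m)⁻¹ * (∑ i, ∑ j, c' i j * ((outerMat (a i j)).mulVec s) p) + lam * s p := by
    intro p
    show ((Hmat a c' + lam • 1).mulVec s) p = _
    rw [Matrix.add_mulVec]
    show ((Hmat a c').mulVec s) p + ((lam • (1:Matrix (Fin d) (Fin d) ℝ)).mulVec s) p = _
    rw [hid, Hmat, mulVec_smul', mulVec_sum']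
    congr 2
    exact Finset.sum_congr rfl fun i _ => by
      rw [mulVec_sum']
      exact Finset.sum_congr rfl fun j _ => mulVec_smul' _ _ _ _
  calc ∑ p, (mulVecE (Hmat a c' + lam • (1 : Matrix (Fin d) (Fin d) ℝ)) s) p * s p
      = ∑ p, (((n : ℝ) * m)⁻¹ * (∑ i, ∑ j, c' i j * ((outerMat (a i j)).mulVec s) p) + lam * s p)
          * s p :=
        Finset.sum_congr rfl fun p _ => by rw [hpt]
    _ = ((n : ℝ) * m)⁻¹ * (∑ i, ∑ j, c' i j * (∑ p, ((outerMat (a i j)).mulVec s) p * s p))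
        + lam * ∑ p, s p * s p := by
        simp only [add_mul, Finset.sum_add_distrib, Finset.mul_sum, Finset.sum_mul, mul_assoc]
        congr 1
        rw [Finset.sum_comm]
        exact Finset.sum_congr rfl fun i _ => by rw [Finset.sum_comm]
    _ = _ := by
        have : ∑ p, s p * s p = ‖s‖^2 := by
          rw [← rinner_sum', rinner, real_inner_self_eq_norm_sq]
        rw [this]
        congr 2
        exact Finset.sum_congr rfl fun i _ => Finset.sum_congr rfl fun j _ => by rw [outer_quad]

open intervalIntegral in
lemma abs_int_bound (f : ℝ → ℝ) (hf : Continuous f) (B : ℝ → ℝ) (hB : Continuous B)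
    (hb : ∀ σ, |f σ| ≤ B σ) (u : ℝ) :
    |∫ σ in (0:ℝ)..u, f σ| ≤ |∫ σ in (0:ℝ)..u, B σ| := by
  have := intervalIntegral.norm_integral_le_abs_of_norm_le (μ := MeasureTheory.volume)
    (f := f) (a := 0) (b := u) (g := B)
    (Filter.Eventually.of_forall fun t => by simpa using hb t) (hB.intervalIntegrable _ _)
  simpa using this

lemma int_abs_eval (u : ℝ) : |∫ σ in (0:ℝ)..u, (abs σ)| = u^2 / 2 := by
  rcases le_or_gt 0 u with h | h
  · rw [intervalIntegral.integral_congr (g := fun σ => σ) ?_, integral_id]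
    · have e : ((u:ℝ)^2 - 0^2)/2 = u^2/2 := by ring
      rw [e, abs_of_nonneg (by positivity)]
    · intro σ hσ
      rw [Set.uIcc_of_le h] at hσ
      exact abs_of_nonneg hσ.1
  · rw [intervalIntegral.integral_congr (g := fun σ => -σ) ?_]
    · have e : ((u:ℝ)^2 - 0^2)/2 = u^2/2 := by ring
      rw [intervalIntegral.integral_neg, integral_id, abs_neg, e, abs_of_nonneg (by positivity)]
    · intro σ hσ
      rw [Set.uIcc_of_ge h.le] at hσ
      exact abs_of_nonpos hσ.2

lemma int_sq_eval (u : ℝ) : |∫ σ in (0:ℝ)..u, σ^2| = |u|^3 / 3 := by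
  rw [integral_pow]
  rw [← abs_pow]
  norm_num [abs_div]

lemma taylor_one_dim (φ : ℝ → ℝ) (hC : ContDiff ℝ 2 φ) (ν : ℝ) (hν : 0 ≤ ν)
    (hlip : ∀ s t, |deriv (deriv φ) s - deriv (deriv φ) t| ≤ ν * |s - t|)
    (t u : ℝ) :
    |φ (t + u) - φ t - deriv φ t * u - deriv (deriv φ) t * u ^ 2 / 2| ≤ ν / 6 * |u| ^ 3 := by
  set f1 := deriv φ with hf1
  set f2 := deriv f1 with hf2
  have hdiff : Differentiable ℝ φ := hC.differentiable (by norm_num)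
  have hC1 : ContDiff ℝ 1 f1 :=
    (contDiff_succ_iff_deriv.mp (show ContDiff ℝ (1+1) φ by norm_num; exact hC)).2.2
  have hdiff1 : Differentiable ℝ f1 := hC1.differentiable (by norm_num)
  have cf1 : Continuous f1 := hdiff1.continuous
  have cf2 : Continuous f2 := by
    have : LipschitzWith (Real.toNNReal ν) f2 := by
      refine LipschitzWith.of_dist_le_mul fun s t => ?_
      simpa [Real.dist_eq, Real.coe_toNNReal ν hν] using hlip s t
    exact this.continuous
  have stepA : ∀ τ : ℝ, |f1 (t + τ) - f1 t - f2 t * τ| ≤ ν / 2 * τ ^ 2 := by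
    intro τ
    have key : f1 (t + τ) - f1 t - f2 t * τ = ∫ σ in (0:ℝ)..τ, (f2 (t + σ) - f2 t) := by
      have : ∀ σ ∈ Set.uIcc (0:ℝ) τ, HasDerivAt (fun σ => f1 (t + σ) - f1 t - f2 t * σ)
          (f2 (t + σ) - f2 t) σ := by
        intro σ _
        have h1 : HasDerivAt (fun σ : ℝ => f1 (t + σ)) (f2 (t + σ)) σ := by
          have := ((hdiff1 (t + σ)).hasDerivAt).comp σ ((hasDerivAt_id σ).const_add t)
          simpa [hf2, Function.comp_def] using this
        simpa using (h1.sub_const (f1 t)).fun_sub ((hasDerivAt_id σ).const_mul (f2 t))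
      have := intervalIntegral.integral_eq_sub_of_hasDerivAt this
        (((cf2.comp (continuous_const.add continuous_id)).sub
          continuous_const).intervalIntegrable _ _)
      simp at this
      rw [this]
      try ring
    rw [key]
    calc |∫ σ in (0:ℝ)..τ, (f2 (t + σ) - f2 t)| ≤ |∫ σ in (0:ℝ)..τ, ν * (abs σ)| := by
          apply abs_int_bound _ ((cf2.comp (continuous_const.add continuous_id)).sub
            continuous_const) _ (continuous_const.mul continuous_abs)
          intro σ
          calc |f2 (t + σ) - f2 t| ≤ ν * |t + σ - t| := hlip _ _
            _ = ν * |σ| := by ring_nf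
      _ = ν / 2 * τ ^ 2 := by
          rw [intervalIntegral.integral_const_mul, abs_mul, abs_of_nonneg hν, int_abs_eval]
          ring
  have key2 : φ (t + u) - φ t - f1 t * u - f2 t * u ^ 2 / 2
      = ∫ σ in (0:ℝ)..u, (f1 (t + σ) - f1 t - f2 t * σ) := by
    have : ∀ σ ∈ Set.uIcc (0:ℝ) u, HasDerivAt
        (fun σ => φ (t + σ) - φ t - f1 t * σ - f2 t * σ ^ 2 / 2)
        (f1 (t + σ) - f1 t - f2 t * σ) σ := by
      intro σ _
      have h1 : HasDerivAt (fun σ : ℝ => φ (t + σ)) (f1 (t + σ)) σ := by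
        have := ((hdiff (t + σ)).hasDerivAt).comp σ ((hasDerivAt_id σ).const_add t)
        simpa [hf1, Function.comp_def] using this
      have h2 : HasDerivAt (fun σ : ℝ => f2 t * σ ^ 2 / 2) (f2 t * σ) σ := by
        have := ((hasDerivAt_pow 2 σ).const_mul (f2 t)).div_const 2
        exact this.congr_deriv (by rw [show ((2:ℕ):ℝ) * σ ^ (2 - 1) = 2 * σ by norm_num]; ring)
      simpa using ((h1.sub_const (φ t)).fun_sub ((hasDerivAt_id σ).const_mul (f1 t))).fun_sub h2
    have := intervalIntegral.integral_eq_sub_of_hasDerivAt this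
      ((((cf1.comp (continuous_const.add continuous_id)).sub continuous_const).sub
        (continuous_const.mul continuous_id)).intervalIntegrable _ _)
    simp at this
    rw [this]
    try ring
  rw [key2]
  calc |∫ σ in (0:ℝ)..u, (f1 (t + σ) - f1 t - f2 t * σ)|
      ≤ |∫ σ in (0:ℝ)..u, ν / 2 * σ ^ 2| := by
        apply abs_int_bound
        · exact ((cf1.comp (continuous_const.add continuous_id)).sub continuous_const).sub
            (continuous_const.mul continuous_id)
        · exact continuous_const.mul (continuous_pow 2)
        · intro σ
          simpa using stepA σ
    _ = ν / 6 * |u| ^ 3 := by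
        rw [intervalIntegral.integral_const_mul, abs_mul, abs_of_nonneg (by positivity),
          int_sq_eval]
        ring

lemma normsq_fderiv {d : ℕ} (x : Euc d) :
    HasFDerivAt (fun y : Euc d => ‖y‖^2) (2 • (innerSL ℝ x : Euc d →L[ℝ] ℝ)) x := by
  have h := (hasFDerivAt_id x).inner ℝ (hasFDerivAt_id x)
  have he : (fun y : Euc d => ‖y‖^2) = fun y : Euc d => (inner ℝ y y : ℝ) := by
    funext y; rw [real_inner_self_eq_norm_sq]
  rw [he]
  refine h.congr_fderiv ?_
  ext s
  simp [fderivInnerCLM_apply, real_inner_comm, two_smul, PiLp.inner_apply, RCLike.inner_apply']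
  exact Finset.sum_congr rfl fun p _ => mul_comm _ _

lemma gradP_eq {n m d : ℕ} (a : Fin n → Fin m → Euc d) (φ : Fin n → Fin m → ℝ → ℝ)
    (hsmooth : ∀ i j, ContDiff ℝ 2 (φ i j)) (lam : ℝ) (P : Euc d → ℝ)
    (hP : ∀ y, P y = ((n : ℝ) * m)⁻¹ * (∑ i, ∑ j, φ i j (rinner (a i j) y))
        + lam / 2 * ‖y‖ ^ 2) (x : Euc d) :
    gradient P x
      = ((n:ℝ)*m)⁻¹ • (∑ i, ∑ j, deriv (φ i j) (rinner (a i j) x) • a i j) + lam • x := by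
  set g : Euc d := ((n:ℝ)*m)⁻¹ • (∑ i, ∑ j, deriv (φ i j) (rinner (a i j) x) • a i j) + lam • x
    with hg
  have h1 : ∀ i j, HasFDerivAt (fun y : Euc d => φ i j (rinner (a i j) y))
      (deriv (φ i j) (rinner (a i j) x) • (innerSL ℝ (a i j) : Euc d →L[ℝ] ℝ)) x := by
    intro i j
    have hφd : HasDerivAt (φ i j) (deriv (φ i j) (rinner (a i j) x)) (rinner (a i j) x) :=
      (((hsmooth i j).differentiable (by norm_num)) _).hasDerivAt
    exact hφd.comp_hasFDerivAt x ((innerSL ℝ (a i j)).hasFDerivAt)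
  have hsum : HasFDerivAt (fun y : Euc d => ∑ i, ∑ j, φ i j (rinner (a i j) y))
      (∑ i, ∑ j, deriv (φ i j) (rinner (a i j) x) • (innerSL ℝ (a i j) : Euc d →L[ℝ] ℝ)) x :=
    HasFDerivAt.fun_sum fun i _ => HasFDerivAt.fun_sum fun j _ => h1 i j
  have hfull : HasFDerivAt P
      (((n:ℝ)*m)⁻¹ • (∑ i, ∑ j,
          deriv (φ i j) (rinner (a i j) x) • (innerSL ℝ (a i j) : Euc d →L[ℝ] ℝ))
        + (lam/2) • (2 • (innerSL ℝ x : Euc d →L[ℝ] ℝ))) x := by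
    have : P = fun y => ((n : ℝ) * m)⁻¹ * (∑ i, ∑ j, φ i j (rinner (a i j) y))
        + lam / 2 * ‖y‖ ^ 2 := funext hP
    rw [this]
    exact (hsum.const_mul _).add ((normsq_fderiv x).const_mul (lam/2))
  have hD : (((n:ℝ)*m)⁻¹ • (∑ i, ∑ j,
          deriv (φ i j) (rinner (a i j) x) • (innerSL ℝ (a i j) : Euc d →L[ℝ] ℝ))
        + (lam/2) • (2 • (innerSL ℝ x : Euc d →L[ℝ] ℝ)))
      = InnerProductSpace.toDual ℝ (Euc d) g := by
    ext s
    simp only [hg, ContinuousLinearMap.add_apply, ContinuousLinearMap.smul_apply,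
      ContinuousLinearMap.coe_sum', Finset.sum_apply, innerSL_apply_apply,
      InnerProductSpace.toDual_apply_apply, inner_add_left, inner_smul_left, sum_inner,
      RCLike.conj_to_real, smul_eq_mul, conj_trivial]
    ring
  rw [hD] at hfull
  exact (hasGradientAt_iff_hasFDerivAt.mpr hfull).gradient

lemma rinner_grad {n m d : ℕ} (a : Fin n → Fin m → Euc d) (φ : Fin n → Fin m → ℝ → ℝ)
    (hsmooth : ∀ i j, ContDiff ℝ 2 (φ i j)) (lam : ℝ) (P : Euc d → ℝ)
    (hP : ∀ y, P y = ((n : ℝ) * m)⁻¹ * (∑ i, ∑ j, φ i j (rinner (a i j) y))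
        + lam / 2 * ‖y‖ ^ 2) (x s : Euc d) :
    rinner (gradient P x) s
      = ((n:ℝ)*m)⁻¹ * (∑ i, ∑ j, deriv (φ i j) (rinner (a i j) x) * rinner (a i j) s)
        + lam * rinner x s := by
  rw [gradP_eq a φ hsmooth lam P hP x]
  simp only [rinner, inner_add_left, inner_smul_left, sum_inner, RCLike.conj_to_real,
    conj_trivial]

set_option maxHeartbeats 2000000

/-- progress of one step of CUBIC-NEWTON-LEARN (Lemma 3). -/
theorem cnl_one_step_progress
    {n m d : ℕ} (hn : 0 < n) (hm : 0 < m) (hd : 0 < d)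
    (ν γ lam R : ℝ) (hν : 0 ≤ ν) (hγ : 0 < γ) (hlam : 0 ≤ lam) (hR : 0 ≤ R)
    (a : Fin n → Fin m → Euc d) (φ : Fin n → Fin m → ℝ → ℝ)
    (φ'' : Fin n → Fin m → ℝ → ℝ) (hφ'' : ∀ i j, φ'' i j = deriv (deriv (φ i j)))
    (hsmooth : ∀ i j, ContDiff ℝ 2 (φ i j))
    (hbdd : ∀ i j t, |φ'' i j t| ≤ γ)
    (hlip : ∀ i j s t, |φ'' i j s - φ'' i j t| ≤ ν * |s - t|)
    (hRub : ∀ i j, ‖a i j‖ ≤ R)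
    (P : Euc d → ℝ)
    (hP : ∀ y, P y = ((n : ℝ) * m)⁻¹ * (∑ i, ∑ j, φ i j (rinner (a i j) y))
        + lam / 2 * ‖y‖ ^ 2)
    (x : Euc d) (c : Fin n → Fin m → ℝ) (hcγ : ∀ i j, |c i j| ≤ γ)
    (β : ℝ)
    (hβub : ∀ i j, (φ'' i j (rinner (a i j) x) + 2 * γ) / (c i j + 2 * γ) ≤ β)
    (hβmem : ∃ i j, β = (φ'' i j (rinner (a i j) x) + 2 * γ) / (c i j + 2 * γ))
    (sstar : Euc d)
    (hss : ∀ s : Euc d,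
        cubicModel a (gradient P x) (fun i j => β * (c i j + 2 * γ) - 2 * γ)
            lam (ν * R ^ 3) sstar ≤
          cubicModel a (gradient P x) (fun i j => β * (c i j + 2 * γ) - 2 * γ)
            lam (ν * R ^ 3) s)
    (xplus : Euc d) (hxplus : xplus = x + sstar) :
    ∀ y : Euc d, P xplus ≤ P y + 9 * γ * R ^ 2 * ‖y - x‖ ^ 2 +
      ν * R ^ 3 / 3 * ‖y - x‖ ^ 3 := by
  intro y
  obtain ⟨i0, j0, hβeq⟩ := hβmem
  have hNM : (0:ℝ) < (n:ℝ) * m := by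
    have h1 : (0:ℝ) < (n:ℝ) := Nat.cast_pos.mpr hn
    have h2 : (0:ℝ) < (m:ℝ) := Nat.cast_pos.mpr hm
    positivity
  set K : ℝ := ((n:ℝ)*m)⁻¹ with hK
  have hK0 : 0 ≤ K := inv_nonneg.mpr hNM.le
  set c' : Fin n → Fin m → ℝ := fun i j => β * (c i j + 2 * γ) - 2 * γ with hc'
  set Mc : ℝ := ν * R ^ 3 with hMc
  have hM0 : 0 ≤ Mc := by positivity
  set g : Euc d := gradient P x with hgdef
  have hinner : ∀ (i : Fin n) (j : Fin m) (w : Euc d), |rinner (a i j) w| ≤ R * ‖w‖ := by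
    intro i j w
    calc |rinner (a i j) w| ≤ ‖a i j‖ * ‖w‖ := abs_real_inner_le_norm _ _
      _ ≤ R * ‖w‖ := mul_le_mul_of_nonneg_right (hRub i j) (norm_nonneg w)
  have hsq : ∀ (i : Fin n) (j : Fin m) (w : Euc d),
      (rinner (a i j) w)^2 ≤ R^2 * ‖w‖^2 := by
    intro i j w
    calc (rinner (a i j) w)^2 = |rinner (a i j) w|^2 := (sq_abs _).symm
      _ ≤ (R*‖w‖)^2 := pow_le_pow_left₀ (abs_nonneg _) (hinner i j w) 2
      _ = R^2*‖w‖^2 := by ring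
  -- Taylor estimate for P
  have PT : ∀ s : Euc d,
      |P (x + s) - P x - rinner g s
        - (K * (∑ i, ∑ j, φ'' i j (rinner (a i j) x) * (rinner (a i j) s)^2) + lam * ‖s‖^2)/2|
      ≤ Mc/6 * ‖s‖^3 := by
    intro s
    have expand : P (x + s) - P x - rinner g s
        - (K * (∑ i, ∑ j, φ'' i j (rinner (a i j) x) * (rinner (a i j) s)^2) + lam * ‖s‖^2)/2
        = K * ∑ i, ∑ j, (φ i j (rinner (a i j) x + rinner (a i j) s)
            - φ i j (rinner (a i j) x)
            - deriv (φ i j) (rinner (a i j) x) * rinner (a i j) s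
            - deriv (deriv (φ i j)) (rinner (a i j) x) * (rinner (a i j) s)^2 / 2) := by
      rw [hP (x+s), hP x, hgdef, rinner_grad a φ hsmooth lam P hP x s]
      have hnrm : ‖x + s‖^2 = ‖x‖^2 + 2 * rinner x s + ‖s‖^2 := by
        rw [rinner]; exact norm_add_sq_real x s
      have hti : ∀ (i : Fin n) (j : Fin m),
          rinner (a i j) (x + s) = rinner (a i j) x + rinner (a i j) s := by
        intro i j; simp [rinner, inner_add_right]
      simp only [hti, hnrm]
      have hφr : ∀ (i : Fin n) (j : Fin m),
          φ'' i j (rinner (a i j) x) = deriv (deriv (φ i j)) (rinner (a i j) x) := by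
        intro i j; rw [hφ'' i j]
      simp only [hφr]
      simp only [Finset.sum_sub_distrib, ← Finset.sum_div]
      ring
    rw [expand]
    have hterm : ∀ (i : Fin n) (j : Fin m),
        |φ i j (rinner (a i j) x + rinner (a i j) s) - φ i j (rinner (a i j) x)
          - deriv (φ i j) (rinner (a i j) x) * rinner (a i j) s
          - deriv (deriv (φ i j)) (rinner (a i j) x) * (rinner (a i j) s)^2 / 2|
        ≤ ν / 6 * (R * ‖s‖) ^ 3 := by
      intro i j
      have hl : ∀ s' t', |deriv (deriv (φ i j)) s' - deriv (deriv (φ i j)) t'|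
          ≤ ν * |s' - t'| := by
        intro s' t'
        have := hlip i j s' t'
        rwa [hφ'' i j] at this
      refine le_trans (taylor_one_dim (φ i j) (hsmooth i j) ν hν hl
        (rinner (a i j) x) (rinner (a i j) s)) ?_
      have h1 : |rinner (a i j) s| ^ 3 ≤ (R * ‖s‖) ^ 3 :=
        pow_le_pow_left₀ (abs_nonneg _) (hinner i j s) 3
      have : 0 ≤ ν / 6 := by positivity
      exact mul_le_mul_of_nonneg_left h1 this
    calc |K * ∑ i, ∑ j, (φ i j (rinner (a i j) x + rinner (a i j) s)
            - φ i j (rinner (a i j) x)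
            - deriv (φ i j) (rinner (a i j) x) * rinner (a i j) s
            - deriv (deriv (φ i j)) (rinner (a i j) x) * (rinner (a i j) s)^2 / 2)|
        ≤ K * ∑ i, ∑ j, (ν / 6 * (R * ‖s‖) ^ 3) := by
          rw [abs_mul, abs_of_nonneg hK0]
          refine mul_le_mul_of_nonneg_left ?_ hK0
          refine le_trans (Finset.abs_sum_le_sum_abs _ _) ?_
          refine Finset.sum_le_sum fun i _ => ?_
          refine le_trans (Finset.abs_sum_le_sum_abs _ _) ?_
          exact Finset.sum_le_sum fun j _ => hterm i j
      _ = Mc/6 * ‖s‖^3 := by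
          rw [Finset.sum_const, Finset.sum_const]
          simp only [Finset.card_univ, Fintype.card_fin, nsmul_eq_mul, hMc, hK]
          field_simp
  -- value of the cubic model
  have Tmodel : ∀ s : Euc d, cubicModel a g c' lam Mc s
      = rinner g s + (K * (∑ i, ∑ j, c' i j * (rinner (a i j) s)^2) + lam * ‖s‖^2)/2
        + Mc/6 * ‖s‖^3 := by
    intro s
    rw [cubicModel, quad_eq]
    ring
  -- scalar facts
  have hc2 : ∀ (i : Fin n) (j : Fin m), γ ≤ c i j + 2*γ := by
    intro i j
    have := abs_le.mp (hcγ i j)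
    linarith [this.1]
  have hc2' : ∀ (i : Fin n) (j : Fin m), 0 < c i j + 2*γ := fun i j =>
    lt_of_lt_of_le hγ (hc2 i j)
  have hβ3 : β ≤ 3 := by
    rw [hβeq, div_le_iff₀ (hc2' i0 j0)]
    have h1 := abs_le.mp (hbdd i0 j0 (rinner (a i0 j0) x))
    have h2 := abs_le.mp (hcγ i0 j0)
    linarith [h1.1, h1.2, h2.1, h2.2]
  have hβ0 : 0 ≤ β := by
    rw [hβeq]
    have h1 := abs_le.mp (hbdd i0 j0 (rinner (a i0 j0) x))
    exact div_nonneg (by linarith [h1.1]) (hc2' i0 j0).le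
  have hlowc : ∀ (i : Fin n) (j : Fin m),
      φ'' i j (rinner (a i j) x) ≤ c' i j := by
    intro i j
    have h := (div_le_iff₀ (hc2' i j)).mp (hβub i j)
    have : c' i j = β * (c i j + 2*γ) - 2*γ := rfl
    rw [this]
    linarith
  have hupc : ∀ (i : Fin n) (j : Fin m),
      c' i j - φ'' i j (rinner (a i j) x) ≤ 8*γ := by
    intro i j
    have h2 := abs_le.mp (hcγ i j)
    have hβc : β * (c i j + 2*γ) ≤ 3 * (3*γ) :=
      mul_le_mul hβ3 (by linarith [h2.2]) (hc2' i j).le (by norm_num)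
    have h1 := abs_le.mp (hbdd i j (rinner (a i j) x))
    have : c' i j = β * (c i j + 2*γ) - 2*γ := rfl
    rw [this]
    linarith [h1.1]
  -- comparison of quadratic forms
  have Qmono : ∀ s : Euc d,
      K * (∑ i, ∑ j, φ'' i j (rinner (a i j) x) * (rinner (a i j) s)^2)
        ≤ K * (∑ i, ∑ j, c' i j * (rinner (a i j) s)^2) := by
    intro s
    refine mul_le_mul_of_nonneg_left ?_ hK0
    refine Finset.sum_le_sum fun i _ => Finset.sum_le_sum fun j _ => ?_
    exact mul_le_mul_of_nonneg_right (hlowc i j) (sq_nonneg _)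
  have Qdiff : ∀ w : Euc d,
      K * (∑ i, ∑ j, c' i j * (rinner (a i j) w)^2)
        - K * (∑ i, ∑ j, φ'' i j (rinner (a i j) x) * (rinner (a i j) w)^2)
        ≤ 8*γ*R^2*‖w‖^2 := by
    intro w
    have step : ∀ (i : Fin n) (j : Fin m),
        c' i j * (rinner (a i j) w)^2 - φ'' i j (rinner (a i j) x) * (rinner (a i j) w)^2
          ≤ 8*γ * (R^2 * ‖w‖^2) := by
      intro i j
      have h := mul_le_mul (hupc i j) (hsq i j w) (sq_nonneg _) (by positivity)
      linarith [h, sub_mul (c' i j) (φ'' i j (rinner (a i j) x)) ((rinner (a i j) w)^2)]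
    calc K * (∑ i, ∑ j, c' i j * (rinner (a i j) w)^2)
          - K * (∑ i, ∑ j, φ'' i j (rinner (a i j) x) * (rinner (a i j) w)^2)
        = K * (∑ i, ∑ j, (c' i j * (rinner (a i j) w)^2
            - φ'' i j (rinner (a i j) x) * (rinner (a i j) w)^2)) := by
          simp only [Finset.sum_sub_distrib]
          ring
      _ ≤ K * (∑ i, ∑ j, (8*γ * (R^2 * ‖w‖^2))) := by
          refine mul_le_mul_of_nonneg_left ?_ hK0
          exact Finset.sum_le_sum fun i _ => Finset.sum_le_sum fun j _ => step i j
      _ = 8*γ*R^2*‖w‖^2 := by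
          rw [Finset.sum_const, Finset.sum_const]
          simp only [Finset.card_univ, Fintype.card_fin, nsmul_eq_mul, hK]
          field_simp
  -- put everything together
  set v : Euc d := y - x with hv
  have hxv : x + v = y := by rw [hv]; abel
  have PTs := abs_le.mp (PT sstar)
  have PTv := abs_le.mp (PT v)
  have hT := hss v
  rw [Tmodel sstar, Tmodel v] at hT
  have hy : P (x + v) = P y := by rw [hxv]
  have hnv : ‖y - x‖ = ‖v‖ := rfl
  have hfin : 0 ≤ γ * R^2 * ‖v‖^2 := by positivity
  have hQm := Qmono sstar
  have hQd := Qdiff v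
  rw [hxplus, hnv]
  nlinarith [PTs.2, PTv.1, hT, hQm, hQd, hy]
end
end

section
/- (Global convergence of CNL, convex case.) Assume P is convex with a minimizer x*, and R_x := sup{ ‖x − x*‖ : P(x) ≤ P(x^0) } < ∞. Let (x^k)_{k≥0} in ℝ^d and reals h_{ij}^k with |h_{ij}^k| ≤ γ (for all i, j, k) satisfy: x^{k+1} = x^k + s^k, where s^k is a global minimizer of s ↦ T(x^k, s) := ⟨∇P(x^k), s⟩ + (1/2)⟨(H^k + λI)s, s⟩ + (M/6)‖s‖³, with M = νR³, β^k = max_{i,j} (h_{ij}(x^k) + 2γ)/(h_{ij}^k + 2γ), and H^k = (1/(nm)) Σ_{i,j} [ β^k (h_{ij}^k + 2γ) − 2γ ] a_{ij} a_{ij}ᵀ. Then for all k ≥ 1: P(x^k) − P(x*) ≤ 81γR²R_x²/k + 9MR_x³/k² + 4(P(x^0) − P(x*))/k³. -/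
open MeasureTheory Filter
open scoped BigOperators

noncomputable section

section Aux


lemma taylor_upper {g g1 g2 : ℝ → ℝ} {L : ℝ}
    (h1 : ∀ t, HasDerivAt g (g1 t) t) (h2 : ∀ t, HasDerivAt g1 (g2 t) t)
    (hL : ∀ t ∈ Set.Icc (0:ℝ) 1, g2 t ≤ g2 0 + L * t) :
    g 1 ≤ g 0 + g1 0 + g2 0 / 2 + L / 6 := by
  set F1 : ℝ → ℝ := fun t => g1 t - g1 0 - t * g2 0 - L * t ^ 2 / 2 with hF1
  have hF1d : ∀ t, HasDerivAt F1 (g2 t - g2 0 - L * t) t := by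
    intro t
    have := ((h2 t).sub_const (g1 0)).sub
      (((hasDerivAt_id t).mul_const (g2 0)))
    have h3 : HasDerivAt (fun t : ℝ => L * t ^ 2 / 2) (L * t) t := by
      have := ((hasDerivAt_pow 2 t).const_mul L).div_const 2
      simpa using this.congr_deriv (by ring)
    simpa [hF1, Pi.sub_def] using this.sub h3
  have hF1anti : AntitoneOn F1 (Set.Icc 0 1) := by
    apply antitoneOn_of_deriv_nonpos (convex_Icc 0 1)
    · exact (fun t _ => (hF1d t).differentiableAt.continuousAt.continuousWithinAt)
    · exact fun t ht => ((hF1d t).differentiableAt).differentiableWithinAt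
    · intro t ht
      rw [(hF1d t).deriv]
      have ht' : t ∈ Set.Icc (0:ℝ) 1 := interior_subset ht
      have := hL t ht'
      linarith
  have hF1le : ∀ t ∈ Set.Icc (0:ℝ) 1, F1 t ≤ 0 := by
    intro t ht
    have := hF1anti (Set.left_mem_Icc.2 one_pos.le) ht ht.1
    simpa [hF1] using this
  set F : ℝ → ℝ := fun t => g t - g 0 - t * g1 0 - t ^ 2 / 2 * g2 0 - L * t ^ 3 / 6 with hF
  have hFd : ∀ t, HasDerivAt F (F1 t) t := by
    intro t
    have hA := ((h1 t).sub_const (g 0)).sub ((hasDerivAt_id t).mul_const (g1 0))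
    have hB : HasDerivAt (fun t : ℝ => t ^ 2 / 2 * g2 0) (t * g2 0) t := by
      have := ((hasDerivAt_pow 2 t).div_const 2).mul_const (g2 0)
      simpa using this.congr_deriv (by ring)
    have hC : HasDerivAt (fun t : ℝ => L * t ^ 3 / 6) (L * t ^ 2 / 2) t := by
      have := ((hasDerivAt_pow 3 t).const_mul L).div_const 6
      simpa using this.congr_deriv (by ring)
    simpa [hF, hF1, Pi.sub_def] using (hA.sub hB).sub hC
  have hFanti : AntitoneOn F (Set.Icc 0 1) := by
    apply antitoneOn_of_deriv_nonpos (convex_Icc 0 1)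
    · exact (fun t _ => (hFd t).differentiableAt.continuousAt.continuousWithinAt)
    · exact fun t ht => ((hFd t).differentiableAt).differentiableWithinAt
    · intro t ht
      rw [(hFd t).deriv]
      exact hF1le t (interior_subset ht)
  have := hFanti (Set.left_mem_Icc.2 one_pos.le) (Set.right_mem_Icc.2 one_pos.le) zero_le_one
  simp only [hF] at this
  norm_num at this
  linarith

lemma taylor_lower {g g1 g2 : ℝ → ℝ} {L : ℝ}
    (h1 : ∀ t, HasDerivAt g (g1 t) t) (h2 : ∀ t, HasDerivAt g1 (g2 t) t)
    (hL : ∀ t ∈ Set.Icc (0:ℝ) 1, g2 0 - L * t ≤ g2 t) :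
    g 0 + g1 0 + g2 0 / 2 - L / 6 ≤ g 1 := by
  have := taylor_upper (g := fun t => -g t) (g1 := fun t => -g1 t) (g2 := fun t => -g2 t)
    (L := L) (fun t => (h1 t).neg) (fun t => (h2 t).neg)
    (fun t ht => by show -g2 t ≤ -g2 0 + L * t; have := hL t ht; linarith)
  linarith


lemma rinner_eq {d : ℕ} (a x : Euc d) : rinner a x = ∑ p, a p * x p := by
  simp [rinner, PiLp.inner_apply, RCLike.inner_apply, mul_comm]

lemma sum_swap4 {n m d : ℕ} (F : Fin d → Fin d → Fin n → Fin m → ℝ) :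
    (∑ p, ∑ q, ∑ i, ∑ j, F p q i j) = ∑ i, ∑ j, ∑ p, ∑ q, F p q i j := by
  trans (∑ i, ∑ p, ∑ q, ∑ j, F p q i j)
  · trans (∑ p, ∑ i, ∑ q, ∑ j, F p q i j)
    · exact Finset.sum_congr rfl fun p _ => Finset.sum_comm
    · exact Finset.sum_comm
  · refine Finset.sum_congr rfl fun i _ => ?_
    trans (∑ p, ∑ j, ∑ q, F p q i j)
    · exact Finset.sum_congr rfl fun p _ => Finset.sum_comm
    · exact Finset.sum_comm

lemma cubic_quad_eq {n m d : ℕ} (a : Fin n → Fin m → Euc d) (c : Fin n → Fin m → ℝ)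
    (lam : ℝ) (s : Euc d) :
    rinner (mulVecE (Hmat a c + lam • (1 : Matrix (Fin d) (Fin d) ℝ)) s) s =
      ((n : ℝ) * m)⁻¹ * (∑ i, ∑ j, c i j * (rinner (a i j) s) ^ 2) + lam * ‖s‖ ^ 2 := by
  have hnorm : (‖s‖:ℝ) ^ 2 = ∑ p, s p * s p := by
    rw [← real_inner_self_eq_norm_sq]; exact rinner_eq s s
  have key : ∀ (v : Euc d), (rinner v s) ^ 2 = ∑ p, ∑ q, v p * s p * (v q * s q) := by
    intro v; rw [rinner_eq, sq, Finset.sum_mul_sum]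
  rw [rinner_eq, hnorm]
  simp only [mulVecE, Matrix.mulVec, dotProduct, Matrix.add_apply, Matrix.smul_apply,
    Matrix.one_apply, Hmat, Matrix.sum_apply, outerMat, smul_eq_mul, key]
  simp only [add_mul, Finset.sum_add_distrib, mul_ite, mul_one, mul_zero,
    Finset.sum_ite_eq, Finset.mem_univ, if_true]
  congr 1
  · simp only [Finset.sum_mul, Finset.mul_sum]
    rw [sum_swap4 (fun p q i j => ((n:ℝ) * (m:ℝ))⁻¹ * (c i j * (a i j p * a i j q)) * s q * s p)]
    refine Finset.sum_congr rfl fun i _ => Finset.sum_congr rfl fun j _ => ?_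
    refine Finset.sum_congr rfl fun p _ => Finset.sum_congr rfl fun q _ => ?_
    ring
  · rw [Finset.mul_sum]
    refine Finset.sum_congr rfl fun p _ => ?_
    simp [ite_mul, Finset.sum_ite_eq]
    ring

lemma grad_formula {n m d : ℕ} (a : Fin n → Fin m → Euc d) (φ : Fin n → Fin m → ℝ → ℝ)
    (hsmooth : ∀ i j, ContDiff ℝ 2 (φ i j)) (lam : ℝ)
    (P : Euc d → ℝ)
    (hP : ∀ y, P y = ((n : ℝ) * m)⁻¹ * (∑ i, ∑ j, φ i j (rinner (a i j) y))
        + lam / 2 * ‖y‖ ^ 2) (y s : Euc d) :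
    rinner (gradient P y) s =
      ((n : ℝ) * m)⁻¹ * (∑ i, ∑ j, deriv (φ i j) (rinner (a i j) y) * rinner (a i j) s)
        + lam * rinner y s := by
  have hPe : P = fun y => ((n : ℝ) * m)⁻¹ * (∑ i, ∑ j, φ i j (rinner (a i j) y))
      + lam / 2 * ‖y‖ ^ 2 := funext hP
  subst hPe
  set D : Euc d →L[ℝ] ℝ :=
    ((n : ℝ) * m)⁻¹ • (∑ i : Fin n, ∑ j : Fin m,
        deriv (φ i j) (rinner (a i j) y) • (innerSL ℝ (a i j))) +
      (lam / 2) • ((2:ℕ) • innerSL ℝ y) with hDdef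
  have hD : HasFDerivAt (fun y => ((n : ℝ) * m)⁻¹ * (∑ i, ∑ j, φ i j (rinner (a i j) y))
      + lam / 2 * ‖y‖ ^ 2) D y := by
    apply HasFDerivAt.add
    · apply HasFDerivAt.const_mul
      apply HasFDerivAt.fun_sum
      intro i _
      apply HasFDerivAt.fun_sum
      intro j _
      have h1 : HasDerivAt (φ i j) (deriv (φ i j) (rinner (a i j) y)) (rinner (a i j) y) :=
        (((hsmooth i j).differentiable (by norm_num)) (rinner (a i j) y)).hasDerivAt
      have h2 : HasFDerivAt (fun z : Euc d => rinner (a i j) z) (innerSL ℝ (a i j)) y :=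
        (innerSL ℝ (a i j)).hasFDerivAt
      exact h1.comp_hasFDerivAt y h2
    · exact (hasStrictFDerivAt_norm_sq y).hasFDerivAt.const_mul (lam / 2)
  have hfd : fderiv ℝ _ y = D := hD.fderiv
  show (inner ℝ (gradient _ y) s : ℝ) = _
  rw [gradient, hfd, InnerProductSpace.toDual_symm_apply]
  simp only [hDdef, ContinuousLinearMap.add_apply, ContinuousLinearMap.smul_apply,
    ContinuousLinearMap.coe_sum', Finset.sum_apply, innerSL_apply_apply, smul_eq_mul,
    ContinuousLinearMap.coe_smul', Pi.smul_apply, nsmul_eq_mul, Nat.cast_ofNat]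
  rw [show (rinner y s : ℝ) = inner ℝ y s from rfl]
  have : ∀ i j, (rinner (a i j) s : ℝ) = inner ℝ (a i j) s := fun _ _ => rfl
  simp only [this]
  ring

lemma P_taylor {n m d : ℕ} (hn : 0 < n) (hm : 0 < m)
    (ν γ lam R : ℝ) (hν : 0 ≤ ν) (hR : 0 ≤ R)
    (a : Fin n → Fin m → Euc d) (φ : Fin n → Fin m → ℝ → ℝ)
    (φ'' : Fin n → Fin m → ℝ → ℝ) (hφ'' : ∀ i j, φ'' i j = deriv (deriv (φ i j)))
    (hsmooth : ∀ i j, ContDiff ℝ 2 (φ i j))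
    (hlip : ∀ i j s t, |φ'' i j s - φ'' i j t| ≤ ν * |s - t|)
    (hRub : ∀ i j, ‖a i j‖ ≤ R)
    (P : Euc d → ℝ)
    (hP : ∀ y, P y = ((n : ℝ) * m)⁻¹ * (∑ i, ∑ j, φ i j (rinner (a i j) y))
        + lam / 2 * ‖y‖ ^ 2)
    (x s : Euc d) :
    P (x + s) ≤ P x + rinner (gradient P x) s
        + (((n : ℝ) * m)⁻¹ * (∑ i, ∑ j, φ'' i j (rinner (a i j) x) * (rinner (a i j) s) ^ 2)
            + lam * ‖s‖ ^ 2) / 2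
        + ν * R ^ 3 * ‖s‖ ^ 3 / 6
    ∧ P x + rinner (gradient P x) s
        + (((n : ℝ) * m)⁻¹ * (∑ i, ∑ j, φ'' i j (rinner (a i j) x) * (rinner (a i j) s) ^ 2)
            + lam * ‖s‖ ^ 2) / 2
        - ν * R ^ 3 * ‖s‖ ^ 3 / 6 ≤ P (x + s) := by
  set Ninv : ℝ := ((n : ℝ) * m)⁻¹ with hNinv
  set α : Fin n → Fin m → ℝ := fun i j => rinner (a i j) x with hα
  set β : Fin n → Fin m → ℝ := fun i j => rinner (a i j) s with hβ
  set cxs : ℝ := rinner x s with hcxs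
  -- differentiability of φ and deriv φ
  have hd1 : ∀ i j, Differentiable ℝ (φ i j) := fun i j =>
    (hsmooth i j).differentiable (by norm_num)
  have hd2 : ∀ i j, Differentiable ℝ (deriv (φ i j)) := by
    intro i j
    have h2 : ContDiff ℝ ((1:ℕ∞) + 1) (φ i j) := by
      have : ((2:ℕ∞) : WithTop ℕ∞) = (1:ℕ∞) + 1 := by norm_num
      exact this ▸ (hsmooth i j)
    exact ((contDiff_succ_iff_deriv.mp h2).2.2).differentiable (by norm_num)
  set G : ℝ → ℝ := fun t => Ninv * (∑ i, ∑ j, φ i j (α i j + t * β i j))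
      + lam / 2 * (‖x‖ ^ 2 + 2 * (t * cxs) + t ^ 2 * ‖s‖ ^ 2) with hG
  set G1 : ℝ → ℝ := fun t => Ninv * (∑ i, ∑ j, deriv (φ i j) (α i j + t * β i j) * β i j)
      + lam / 2 * (2 * cxs + 2 * t * ‖s‖ ^ 2) with hG1
  set G2 : ℝ → ℝ := fun t => Ninv * (∑ i, ∑ j, φ'' i j (α i j + t * β i j) * β i j ^ 2)
      + lam * ‖s‖ ^ 2 with hG2
  have hGP : ∀ t, G t = P (x + t • s) := by
    intro t
    rw [hP]
    have h1 : ∀ i j, rinner (a i j) (x + t • s) = α i j + t * β i j := by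
      intro i j
      simp only [rinner, inner_add_right, real_inner_smul_right, hα, hβ]
    have h2 : ‖x + t • s‖ ^ 2 = ‖x‖ ^ 2 + 2 * (t * cxs) + t ^ 2 * ‖s‖ ^ 2 := by
      rw [norm_add_sq_real, real_inner_smul_right, norm_smul]
      simp [Real.norm_eq_abs, mul_pow, sq_abs, hcxs, rinner]
    simp only [hG, h1, h2]
  have hlin : ∀ (i : Fin n) (j : Fin m) (t : ℝ),
      HasDerivAt (fun t : ℝ => α i j + t * β i j) (β i j) t := by
    intro i j t
    simpa using ((hasDerivAt_id t).mul_const (β i j)).const_add (α i j)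
  have hGd : ∀ t, HasDerivAt G (G1 t) t := by
    intro t
    apply HasDerivAt.add
    · apply HasDerivAt.const_mul
      apply HasDerivAt.fun_sum
      intro i _
      apply HasDerivAt.fun_sum
      intro j _
      exact ((hd1 i j _).hasDerivAt).comp t (hlin i j t)
    · have h1 := ((hasDerivAt_id t).mul_const cxs).const_mul (2:ℝ)
      have h2 := (hasDerivAt_pow 2 t).mul_const (‖s‖ ^ 2)
      have h3 := ((hasDerivAt_const t (‖x‖ ^ 2)).add h1).add h2
      exact (h3.const_mul (lam / 2)).congr_deriv (by ring)
  have hG1d : ∀ t, HasDerivAt G1 (G2 t) t := by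
    intro t
    apply HasDerivAt.add
    · apply HasDerivAt.const_mul
      apply HasDerivAt.fun_sum
      intro i _
      apply HasDerivAt.fun_sum
      intro j _
      have h1 := (((hd2 i j _).hasDerivAt).comp t (hlin i j t)).mul_const (β i j)
      exact h1.congr_deriv (by rw [hφ'' i j]; ring)
    · have h1 := ((hasDerivAt_id t).const_mul (2:ℝ)).mul_const (‖s‖ ^ 2)
      exact (((hasDerivAt_const t (2 * cxs)).add h1).const_mul (lam / 2)).congr_deriv
        (by ring)
  -- Lipschitz bound for G2
  have hβle : ∀ i j, |β i j| ≤ R * ‖s‖ := by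
    intro i j
    calc |β i j| ≤ ‖a i j‖ * ‖s‖ := abs_real_inner_le_norm _ _
    _ ≤ R * ‖s‖ := by
        apply mul_le_mul_of_nonneg_right (hRub i j) (norm_nonneg s)
  have hNpos : (0:ℝ) < (n : ℝ) * m := by positivity
  have hG2lip : ∀ t ∈ Set.Icc (0:ℝ) 1, |G2 t - G2 0| ≤ ν * R ^ 3 * ‖s‖ ^ 3 * t := by
    intro t ht
    have hdiff : G2 t - G2 0 =
        Ninv * (∑ i, ∑ j, (φ'' i j (α i j + t * β i j) - φ'' i j (α i j + 0 * β i j))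
          * β i j ^ 2) := by
      simp only [hG2]
      have harith : ∀ S T C D : ℝ, D * S + C - (D * T + C) = D * (S - T) :=
        fun _ _ _ _ => by ring
      rw [harith]
      congr 1
      rw [← Finset.sum_sub_distrib]
      refine Finset.sum_congr rfl fun i _ => ?_
      rw [← Finset.sum_sub_distrib]
      refine Finset.sum_congr rfl fun j _ => ?_
      ring
    rw [hdiff, abs_mul]
    have hNa : |Ninv| = Ninv := abs_of_pos (by positivity)
    rw [hNa]
    have hterm : ∀ (i : Fin n) (j : Fin m),
        |(φ'' i j (α i j + t * β i j) - φ'' i j (α i j + 0 * β i j)) * β i j ^ 2|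
          ≤ ν * R ^ 3 * ‖s‖ ^ 3 * t := by
      intro i j
      rw [abs_mul]
      have h1 : |φ'' i j (α i j + t * β i j) - φ'' i j (α i j + 0 * β i j)|
          ≤ ν * (t * (R * ‖s‖)) := by
        calc _ ≤ ν * |(α i j + t * β i j) - (α i j + 0 * β i j)| := hlip i j _ _
        _ ≤ ν * (t * (R * ‖s‖)) := by
            apply mul_le_mul_of_nonneg_left _ hν
            have : (α i j + t * β i j) - (α i j + 0 * β i j) = t * β i j := by ring
            rw [this, abs_mul, abs_of_nonneg ht.1]
            exact mul_le_mul_of_nonneg_left (hβle i j) ht.1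
      have h2 : |β i j ^ 2| ≤ (R * ‖s‖) ^ 2 := by
        rw [abs_pow]
        exact pow_le_pow_left₀ (abs_nonneg _) (hβle i j) 2
      calc |φ'' i j (α i j + t * β i j) - φ'' i j (α i j + 0 * β i j)| * |β i j ^ 2|
          ≤ ν * (t * (R * ‖s‖)) * (R * ‖s‖) ^ 2 := by
            exact mul_le_mul h1 h2 (abs_nonneg _) (mul_nonneg hν (mul_nonneg ht.1 (by positivity)))
      _ = ν * R ^ 3 * ‖s‖ ^ 3 * t := by ring
    have hsum : |∑ i, ∑ j, (φ'' i j (α i j + t * β i j) - φ'' i j (α i j + 0 * β i j))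
        * β i j ^ 2| ≤ (n : ℝ) * m * (ν * R ^ 3 * ‖s‖ ^ 3 * t) := by
      calc _ ≤ ∑ i, |∑ j, (φ'' i j (α i j + t * β i j) - φ'' i j (α i j + 0 * β i j))
            * β i j ^ 2| := Finset.abs_sum_le_sum_abs _ _
      _ ≤ ∑ i : Fin n, ∑ j : Fin m, |(φ'' i j (α i j + t * β i j)
            - φ'' i j (α i j + 0 * β i j)) * β i j ^ 2| :=
          Finset.sum_le_sum fun i _ => Finset.abs_sum_le_sum_abs _ _
      _ ≤ ∑ i : Fin n, ∑ j : Fin m, ν * R ^ 3 * ‖s‖ ^ 3 * t :=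
          Finset.sum_le_sum fun i _ => Finset.sum_le_sum fun j _ => hterm i j
      _ = (n : ℝ) * m * (ν * R ^ 3 * ‖s‖ ^ 3 * t) := by
          simp [Finset.sum_const, Finset.card_univ]
          ring
    calc Ninv * |∑ i, ∑ j, (φ'' i j (α i j + t * β i j) - φ'' i j (α i j + 0 * β i j))
        * β i j ^ 2| ≤ Ninv * ((n : ℝ) * m * (ν * R ^ 3 * ‖s‖ ^ 3 * t)) :=
          mul_le_mul_of_nonneg_left hsum (by positivity)
    _ = ν * R ^ 3 * ‖s‖ ^ 3 * t := by
        rw [hNinv]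
        field_simp
  -- assemble
  have hup : ∀ t ∈ Set.Icc (0:ℝ) 1, G2 t ≤ G2 0 + ν * R ^ 3 * ‖s‖ ^ 3 * t := by
    intro t ht
    have := abs_le.mp (hG2lip t ht)
    linarith [this.2]
  have hlo : ∀ t ∈ Set.Icc (0:ℝ) 1, G2 0 - ν * R ^ 3 * ‖s‖ ^ 3 * t ≤ G2 t := by
    intro t ht
    have := abs_le.mp (hG2lip t ht)
    linarith [this.1]
  have e0 : G 0 = P x := by rw [hGP 0]; norm_num
  have e1 : G 1 = P (x + s) := by rw [hGP 1]; norm_num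
  have e2 : G1 0 = rinner (gradient P x) s := by
    rw [grad_formula a φ hsmooth lam P hP x s]
    simp only [hG1, hα, hβ, hNinv, hcxs, zero_mul, add_zero, mul_zero]
    ring
  have e3 : G2 0 = Ninv * (∑ i, ∑ j, φ'' i j (rinner (a i j) x) * (rinner (a i j) s) ^ 2)
      + lam * ‖s‖ ^ 2 := by
    simp only [hG2, hα, hβ, zero_mul, add_zero]
  constructor
  · have h := taylor_upper hGd hG1d hup
    rw [e0, e1, e2, e3] at h
    linarith
  · have h := taylor_lower hGd hG1d hlo
    rw [e0, e1, e2, e3] at h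
    linarith

set_option maxHeartbeats 1000000 in

lemma cnl_recursion (A C : ℝ) (hA : 0 ≤ A) (hC : 0 ≤ C) (δ : ℕ → ℝ)
    (hδnn : ∀ k, 0 ≤ δ k)
    (hrec : ∀ k, ∀ t ∈ Set.Icc (0:ℝ) 1,
      δ (k + 1) ≤ (1 - t) * δ k + A * t ^ 2 + C * t ^ 3) :
    ∀ k : ℕ, 1 ≤ k →
      δ k ≤ 81 / 4 * A / (k : ℝ) + 27 * C / (k : ℝ) ^ 2 + 4 * δ 0 / (k : ℝ) ^ 3 := by
  refine Nat.le_induction ?_ ?_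
  · have h := hrec 0 0 (by norm_num)
    have h0 := hδnn 0
    norm_num at h ⊢
    linarith
  · intro k hk IH
    by_cases hk1 : k = 1
    · subst hk1
      have h := hrec 1 1 (by norm_num)
      have h0 := hδnn 0
      norm_num at h ⊢
      linarith
    · have hk2 : 2 ≤ k := by omega
      set K : ℝ := (k : ℝ) with hKdef
      have hK2 : (2:ℝ) ≤ K := by rw [hKdef]; exact_mod_cast hk2
      have hK0 : (0:ℝ) < K := by linarith
      have hK1 : (0:ℝ) < K + 1 := by linarith
      set t : ℝ := 3 / (K + 1) with htdef
      have ht : t ∈ Set.Icc (0:ℝ) 1 := by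
        constructor
        · positivity
        · rw [htdef, div_le_one hK1]; linarith
      have ht1 : 1 - t = (K - 2) / (K + 1) := by
        rw [htdef]; field_simp; ring
      have ht1nn : 0 ≤ 1 - t := by
        rw [ht1]; apply div_nonneg <;> linarith
      have h := hrec k t ht
      have hIH' : (1 - t) * δ k ≤ (1 - t) * (81 / 4 * A / K + 27 * C / K ^ 2 + 4 * δ 0 / K ^ 3) :=
        mul_le_mul_of_nonneg_left IH ht1nn
      -- coefficient inequalities
      have q1 : (1 - t) * (81 / 4 / K) + t ^ 2 ≤ 81 / 4 / (K + 1) := by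
        have e : 81 / 4 / (K + 1) - ((1 - t) * (81 / 4 / K) + t ^ 2)
            = (126 * K + 162) / (4 * (K * (K + 1) ^ 2)) := by
          rw [htdef]; field_simp; ring
        nlinarith [div_nonneg (by linarith : (0:ℝ) ≤ 126 * K + 162)
          (by positivity : (0:ℝ) ≤ 4 * (K * (K + 1) ^ 2)), e]
      have q2 : (1 - t) * (27 / K ^ 2) + t ^ 3 ≤ 27 / (K + 1) ^ 2 := by
        have e : 27 / (K + 1) ^ 2 - ((1 - t) * (27 / K ^ 2) + t ^ 3)
            = (81 * K + 54) / (K ^ 2 * (K + 1) ^ 3) := by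
          rw [htdef]; field_simp; ring
        nlinarith [div_nonneg (by linarith : (0:ℝ) ≤ 81 * K + 54)
          (by positivity : (0:ℝ) ≤ K ^ 2 * (K + 1) ^ 3), e]
      have q3 : (1 - t) * (4 / K ^ 3) ≤ 4 / (K + 1) ^ 3 := by
        have e : 4 / (K + 1) ^ 3 - (1 - t) * (4 / K ^ 3)
            = (12 * K + 8) / (K ^ 3 * (K + 1) ^ 3) := by
          rw [htdef]; field_simp; ring
        nlinarith [div_nonneg (by linarith : (0:ℝ) ≤ 12 * K + 8)
          (by positivity : (0:ℝ) ≤ K ^ 3 * (K + 1) ^ 3), e]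
      have p1 : (1 - t) * (81 / 4 * A / K) + A * t ^ 2 ≤ 81 / 4 * A / (K + 1) := by
        have eL : (1 - t) * (81 / 4 * A / K) + A * t ^ 2
            = A * ((1 - t) * (81 / 4 / K) + t ^ 2) := by ring
        have eR : 81 / 4 * A / (K + 1) = A * (81 / 4 / (K + 1)) := by ring
        rw [eL, eR]
        exact mul_le_mul_of_nonneg_left q1 hA
      have p2 : (1 - t) * (27 * C / K ^ 2) + C * t ^ 3 ≤ 27 * C / (K + 1) ^ 2 := by
        have eL : (1 - t) * (27 * C / K ^ 2) + C * t ^ 3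
            = C * ((1 - t) * (27 / K ^ 2) + t ^ 3) := by ring
        have eR : 27 * C / (K + 1) ^ 2 = C * (27 / (K + 1) ^ 2) := by ring
        rw [eL, eR]
        exact mul_le_mul_of_nonneg_left q2 hC
      have p3 : (1 - t) * (4 * δ 0 / K ^ 3) ≤ 4 * δ 0 / (K + 1) ^ 3 := by
        have eL : (1 - t) * (4 * δ 0 / K ^ 3) = δ 0 * ((1 - t) * (4 / K ^ 3)) := by ring
        have eR : 4 * δ 0 / (K + 1) ^ 3 = δ 0 * (4 / (K + 1) ^ 3) := by ring
        rw [eL, eR]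
        exact mul_le_mul_of_nonneg_left q3 (hδnn 0)
      have hcast : ((k + 1 : ℕ) : ℝ) = K + 1 := by push_cast [hKdef]; ring
      rw [hcast]
      have hdist : (1 - t) * (81 / 4 * A / K + 27 * C / K ^ 2 + 4 * δ 0 / K ^ 3)
          = (1 - t) * (81 / 4 * A / K) + (1 - t) * (27 * C / K ^ 2)
            + (1 - t) * (4 * δ 0 / K ^ 3) := by ring
      rw [hdist] at hIH'
      linarith

end Aux

set_option maxHeartbeats 4000000 in
/-- global sublinear convergence of CNL in the convex case (Theorem 4). -/
theorem cnl_global_convex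
    {n m d : ℕ} (hn : 0 < n) (hm : 0 < m) (hd : 0 < d)
    (ν γ lam R : ℝ) (hν : 0 ≤ ν) (hγ : 0 < γ) (hlam : 0 ≤ lam) (hR : 0 ≤ R)
    (a : Fin n → Fin m → Euc d) (φ : Fin n → Fin m → ℝ → ℝ)
    (φ'' : Fin n → Fin m → ℝ → ℝ) (hφ'' : ∀ i j, φ'' i j = deriv (deriv (φ i j)))
    (hsmooth : ∀ i j, ContDiff ℝ 2 (φ i j))
    (hbdd : ∀ i j t, |φ'' i j t| ≤ γ)
    (hlip : ∀ i j s t, |φ'' i j s - φ'' i j t| ≤ ν * |s - t|)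
    (hRub : ∀ i j, ‖a i j‖ ≤ R)
    (P : Euc d → ℝ)
    (hP : ∀ y, P y = ((n : ℝ) * m)⁻¹ * (∑ i, ∑ j, φ i j (rinner (a i j) y))
        + lam / 2 * ‖y‖ ^ 2)
    (hPconv : ConvexOn ℝ Set.univ P)
    (xstar : Euc d) (hmin : ∀ y, P xstar ≤ P y)
    (x : ℕ → Euc d) (c : Fin n → Fin m → ℕ → ℝ)
    (hcγ : ∀ i j k, |c i j k| ≤ γ)
    (B : ℕ → ℝ)
    (hBub : ∀ k i j,
        (φ'' i j (rinner (a i j) (x k)) + 2 * γ) / (c i j k + 2 * γ) ≤ B k)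
    (hBmem : ∀ k, ∃ i j,
        B k = (φ'' i j (rinner (a i j) (x k)) + 2 * γ) / (c i j k + 2 * γ))
    (hstep : ∀ k, ∀ s : Euc d,
        cubicModel a (gradient P (x k)) (fun i j => B k * (c i j k + 2 * γ) - 2 * γ)
            lam (ν * R ^ 3) (x (k + 1) - x k) ≤
          cubicModel a (gradient P (x k)) (fun i j => B k * (c i j k + 2 * γ) - 2 * γ)
            lam (ν * R ^ 3) s)
    (Rx : ℝ)
    (hRx : Rx = sSup {r : ℝ | ∃ y : Euc d, P y ≤ P (x 0) ∧ r = ‖y - xstar‖})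
    (hRxBdd : BddAbove {r : ℝ | ∃ y : Euc d, P y ≤ P (x 0) ∧ r = ‖y - xstar‖}) :
    ∀ k : ℕ, 1 ≤ k →
      P (x k) - P xstar ≤ 81 * γ * R ^ 2 * Rx ^ 2 / (k : ℝ) +
        9 * (ν * R ^ 3) * Rx ^ 3 / (k : ℝ) ^ 2 +
        4 * (P (x 0) - P xstar) / (k : ℝ) ^ 3 := by
  
  classical
  set Ninv : ℝ := ((n : ℝ) * m)⁻¹ with hNinvdef
  have hNpos : (0:ℝ) < (n:ℝ) * m := by positivity
  have hNinv0 : 0 ≤ Ninv := by rw [hNinvdef]; positivity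
  set M : ℝ := ν * R ^ 3 with hMdef
  have hM0 : 0 ≤ M := by rw [hMdef]; exact mul_nonneg hν (pow_nonneg hR 3)
  -- Rx facts
  have hball : ∀ y : Euc d, P y ≤ P (x 0) → ‖y - xstar‖ ≤ Rx := by
    intro y hy
    rw [hRx]
    exact le_csSup hRxBdd ⟨y, hy, rfl⟩
  have hRx0 : 0 ≤ Rx := (norm_nonneg _).trans (hball (x 0) le_rfl)
  -- coefficient facts
  set cc : ℕ → Fin n → Fin m → ℝ := fun k i j => B k * (c i j k + 2 * γ) - 2 * γ with hccdef
  have hcpos : ∀ i j k, γ ≤ c i j k + 2 * γ := by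
    intro i j k
    have := abs_le.mp (hcγ i j k)
    linarith [this.1]
  have hccB3 : ∀ k, B k ≤ 3 := by
    intro k
    obtain ⟨i, j, hij⟩ := hBmem k
    rw [hij, div_le_iff₀ (by linarith [hcpos i j k])]
    have h1 := abs_le.mp (hbdd i j (rinner (a i j) (x k)))
    have h2 := abs_le.mp (hcγ i j k)
    nlinarith [h1.2, h2.1]
  have hccB0 : ∀ k, 0 ≤ B k := by
    intro k
    obtain ⟨i, j, hij⟩ := hBmem k
    rw [hij]
    have h1 := abs_le.mp (hbdd i j (rinner (a i j) (x k)))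
    apply div_nonneg <;> linarith [h1.1, hcpos i j k]
  have hlb : ∀ k i j, φ'' i j (rinner (a i j) (x k)) ≤ cc k i j := by
    intro k i j
    have h := hBub k i j
    rw [div_le_iff₀ (by linarith [hcpos i j k])] at h
    rw [hccdef]
    simp only
    nlinarith
  have hub : ∀ k i j, cc k i j ≤ 7 * γ := by
    intro k i j
    rw [hccdef]
    simp only
    have h2 := abs_le.mp (hcγ i j k)
    have h3 := hccB3 k
    have h0 := hccB0 k
    nlinarith [hcpos i j k]
  -- model expansion
  have hmodel : ∀ (k : ℕ) (s : Euc d),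
      cubicModel a (gradient P (x k)) (fun i j => B k * (c i j k + 2 * γ) - 2 * γ)
          lam M s
        = rinner (gradient P (x k)) s
          + 1 / 2 * (Ninv * (∑ i, ∑ j, cc k i j * (rinner (a i j) s) ^ 2) + lam * ‖s‖ ^ 2)
          + M / 6 * ‖s‖ ^ 3 := by
    intro k s
    rw [cubicModel, cubic_quad_eq]
  -- Taylor bounds
  have hTay := fun (k : ℕ) (s : Euc d) =>
    P_taylor hn hm ν γ lam R hν hR a φ φ'' hφ'' hsmooth hlip hRub P hP (x k) s
  -- upper bound of P by the model
  have hPx_ub : ∀ (k : ℕ) (s : Euc d),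
      P (x k + s) ≤ P (x k)
        + cubicModel a (gradient P (x k)) (fun i j => B k * (c i j k + 2 * γ) - 2 * γ)
            lam M s := by
    intro k s
    have h1 := (hTay k s).1
    have hsum : (∑ i, ∑ j, φ'' i j (rinner (a i j) (x k)) * (rinner (a i j) s) ^ 2)
        ≤ ∑ i, ∑ j, cc k i j * (rinner (a i j) s) ^ 2 := by
      refine Finset.sum_le_sum fun i _ => Finset.sum_le_sum fun j _ => ?_
      exact mul_le_mul_of_nonneg_right (hlb k i j) (sq_nonneg _)
    have h2 : Ninv * (∑ i, ∑ j, φ'' i j (rinner (a i j) (x k)) * (rinner (a i j) s) ^ 2)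
        ≤ Ninv * (∑ i, ∑ j, cc k i j * (rinner (a i j) s) ^ 2) :=
      mul_le_mul_of_nonneg_left hsum hNinv0
    rw [hmodel k s]
    rw [hMdef] at *
    linarith
  have hT0 : ∀ k : ℕ,
      cubicModel a (gradient P (x k)) (fun i j => B k * (c i j k + 2 * γ) - 2 * γ)
        lam M 0 = 0 := by
    intro k
    rw [hmodel k 0]
    simp [rinner, inner_zero_right]
  have hstep' : ∀ (k : ℕ) (s : Euc d),
      cubicModel a (gradient P (x k)) (fun i j => B k * (c i j k + 2 * γ) - 2 * γ)
          lam M (x (k + 1) - x k)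
        ≤ cubicModel a (gradient P (x k)) (fun i j => B k * (c i j k + 2 * γ) - 2 * γ)
            lam M s := by
    intro k s
    rw [hMdef]
    exact hstep k s
  have heq : ∀ k : ℕ, x k + (x (k + 1) - x k) = x (k + 1) := by
    intro k; abel
  have hdesc : ∀ k : ℕ, P (x (k + 1)) ≤ P (x k) := by
    intro k
    have h1 := hPx_ub k (x (k + 1) - x k)
    rw [heq k] at h1
    have h2 := hstep' k 0
    rw [hT0 k] at h2
    linarith
  have hPle0 : ∀ k : ℕ, P (x k) ≤ P (x 0) := by
    intro k
    induction k with
    | zero => exact le_rfl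
    | succ k ih => exact (hdesc k).trans ih
  have hxball : ∀ k : ℕ, ‖xstar - x k‖ ≤ Rx := by
    intro k
    rw [norm_sub_rev]
    exact hball (x k) (hPle0 k)
  -- the main recursion inequality
  have hrec : ∀ k : ℕ, ∀ t ∈ Set.Icc (0:ℝ) 1,
      P (x (k + 1)) - P xstar ≤ (1 - t) * (P (x k) - P xstar)
        + (4 * γ * R ^ 2 * Rx ^ 2) * t ^ 2 + (M * Rx ^ 3 / 3) * t ^ 3 := by
    intro k t ht
    obtain ⟨ht0, ht1⟩ := ht
    set v : Euc d := xstar - x k with hvdef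
    have hv : ‖v‖ ≤ Rx := hxball k
    have hv0 : 0 ≤ ‖v‖ := norm_nonneg v
    -- step 1: P (x (k+1)) ≤ P (x k) + T (t • v)
    have h1 : P (x (k + 1)) ≤ P (x k)
        + cubicModel a (gradient P (x k)) (fun i j => B k * (c i j k + 2 * γ) - 2 * γ)
            lam M (t • v) := by
      have ha := hPx_ub k (x (k + 1) - x k)
      rw [heq k] at ha
      linarith [hstep' k (t • v)]
    -- norms and inner products of t • v
    have hnorm_tv : ‖t • v‖ = t * ‖v‖ := by
      rw [norm_smul, Real.norm_eq_abs, abs_of_nonneg ht0]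
    have hinn_tv : ∀ i j, rinner (a i j) (t • v) = t * rinner (a i j) v := by
      intro i j
      show (inner ℝ (a i j) (t • v) : ℝ) = t * inner ℝ (a i j) v
      exact real_inner_smul_right _ _ _
    -- Taylor lower bound gives a bound on the linear term
    have h2 := (hTay k (t • v)).2
    -- difference of quadratic forms
    have hQdiff : Ninv * (∑ i, ∑ j, cc k i j * (rinner (a i j) (t • v)) ^ 2)
        - Ninv * (∑ i, ∑ j, φ'' i j (rinner (a i j) (x k)) * (rinner (a i j) (t • v)) ^ 2)
        ≤ 8 * γ * R ^ 2 * Rx ^ 2 * t ^ 2 := by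
      have hterm : ∀ (i : Fin n) (j : Fin m),
          (cc k i j - φ'' i j (rinner (a i j) (x k))) * (rinner (a i j) (t • v)) ^ 2
            ≤ 8 * γ * (t * (R * Rx)) ^ 2 := by
        intro i j
        have hc1 : cc k i j - φ'' i j (rinner (a i j) (x k)) ≤ 8 * γ := by
          have := abs_le.mp (hbdd i j (rinner (a i j) (x k)))
          linarith [hub k i j, this.1]
        have hc0 : 0 ≤ cc k i j - φ'' i j (rinner (a i j) (x k)) := by
          linarith [hlb k i j]
        have hsq : (rinner (a i j) (t • v)) ^ 2 ≤ (t * (R * Rx)) ^ 2 := by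
          rw [hinn_tv i j, mul_pow, mul_pow]
          have hav : |rinner (a i j) v| ≤ R * Rx := by
            calc |rinner (a i j) v| ≤ ‖a i j‖ * ‖v‖ := abs_real_inner_le_norm _ _
            _ ≤ R * Rx := mul_le_mul (hRub i j) hv hv0 hR
          have : (rinner (a i j) v) ^ 2 ≤ (R * Rx) ^ 2 := by
            rw [← sq_abs]
            exact pow_le_pow_left₀ (abs_nonneg _) hav 2
          nlinarith [sq_nonneg t]
        exact mul_le_mul hc1 hsq (sq_nonneg _) (by linarith)
      have e1 : (∑ i, ∑ j, cc k i j * (rinner (a i j) (t • v)) ^ 2)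
          - (∑ i, ∑ j, φ'' i j (rinner (a i j) (x k)) * (rinner (a i j) (t • v)) ^ 2)
          = ∑ i : Fin n, ∑ j : Fin m, (cc k i j - φ'' i j (rinner (a i j) (x k)))
              * (rinner (a i j) (t • v)) ^ 2 := by
        rw [← Finset.sum_sub_distrib]
        refine Finset.sum_congr rfl fun i _ => ?_
        rw [← Finset.sum_sub_distrib]
        refine Finset.sum_congr rfl fun j _ => ?_
        ring
      have e2 : (∑ i : Fin n, ∑ j : Fin m, (8:ℝ) * γ * (t * (R * Rx)) ^ 2)
          = (n : ℝ) * m * (8 * γ * (t * (R * Rx)) ^ 2) := by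
        simp [Finset.sum_const, Finset.card_univ]
        ring
      have hsum : (∑ i, ∑ j, cc k i j * (rinner (a i j) (t • v)) ^ 2)
          - (∑ i, ∑ j, φ'' i j (rinner (a i j) (x k)) * (rinner (a i j) (t • v)) ^ 2)
          ≤ (n : ℝ) * m * (8 * γ * (t * (R * Rx)) ^ 2) := by
        rw [e1, ← e2]
        exact Finset.sum_le_sum fun i _ => Finset.sum_le_sum fun j _ => hterm i j
      have h' : Ninv * ((∑ i, ∑ j, cc k i j * (rinner (a i j) (t • v)) ^ 2)
          - (∑ i, ∑ j, φ'' i j (rinner (a i j) (x k)) * (rinner (a i j) (t • v)) ^ 2))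
          ≤ Ninv * ((n : ℝ) * m * (8 * γ * (t * (R * Rx)) ^ 2)) :=
        mul_le_mul_of_nonneg_left hsum hNinv0
      have e3 : Ninv * ((n : ℝ) * m * (8 * γ * (t * (R * Rx)) ^ 2))
          = 8 * γ * R ^ 2 * Rx ^ 2 * t ^ 2 := by
        rw [hNinvdef]
        field_simp
      have e4 := mul_sub Ninv (∑ i, ∑ j, cc k i j * (rinner (a i j) (t • v)) ^ 2)
        (∑ i, ∑ j, φ'' i j (rinner (a i j) (x k)) * (rinner (a i j) (t • v)) ^ 2)
      linarith [h', e3, e4]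
    -- cubic terms
    have hcub : M * ‖t • v‖ ^ 3 ≤ M * (t ^ 3 * Rx ^ 3) := by
      apply mul_le_mul_of_nonneg_left _ hM0
      rw [hnorm_tv, mul_pow]
      exact mul_le_mul_of_nonneg_left (pow_le_pow_left₀ hv0 hv 3) (pow_nonneg ht0 3)
    -- convexity
    have hconv : P (x k + t • v) ≤ (1 - t) * P (x k) + t * P xstar := by
      have hcomb : x k + t • v = (1 - t) • x k + t • xstar := by
        rw [hvdef, smul_sub, sub_smul, one_smul]
        abel
      rw [hcomb]
      exact hPconv.2 (Set.mem_univ _) (Set.mem_univ _) (by linarith) ht0 (by ring)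
    -- combine
    rw [hmodel k (t • v)] at h1
    rw [← hNinvdef, show ν * R ^ 3 = M from hMdef.symm] at h2
    have hnorm2 : ‖t • v‖ ^ 2 = t ^ 2 * ‖v‖ ^ 2 := by rw [hnorm_tv]; ring
    have hnorm3 : ‖t • v‖ ^ 3 = t ^ 3 * ‖v‖ ^ 3 := by rw [hnorm_tv]; ring
    linarith [h1, h2, hQdiff, hcub, hconv]
  -- apply the recursion lemma
  intro k hk
  have hA : (0:ℝ) ≤ 4 * γ * R ^ 2 * Rx ^ 2 :=
    mul_nonneg (mul_nonneg (mul_nonneg (by norm_num) hγ.le) (sq_nonneg R)) (sq_nonneg Rx)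
  have hC : (0:ℝ) ≤ M * Rx ^ 3 / 3 :=
    div_nonneg (mul_nonneg hM0 (pow_nonneg hRx0 3)) (by norm_num)
  have hres := cnl_recursion (4 * γ * R ^ 2 * Rx ^ 2) (M * Rx ^ 3 / 3) hA hC
    (fun k => P (x k) - P xstar) (fun k => by simp; linarith [hmin (x k)])
    (fun k t ht => hrec k t ht) k hk
  have hkpos : (0:ℝ) < (k:ℝ) := by exact_mod_cast hk
  have e : 81 / 4 * (4 * γ * R ^ 2 * Rx ^ 2) / (k:ℝ) + 27 * (M * Rx ^ 3 / 3) / (k:ℝ) ^ 2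
      + 4 * (P (x 0) - P xstar) / (k:ℝ) ^ 3
      = 81 * γ * R ^ 2 * Rx ^ 2 / (k:ℝ) + 9 * (ν * R ^ 3) * Rx ^ 3 / (k:ℝ) ^ 2
        + 4 * (P (x 0) - P xstar) / (k:ℝ) ^ 3 := by
    rw [hMdef]; ring
  linarith [e ▸ hres]
end
end

section
/- (Bernoulli compressor.) Fix x ∈ ℝ^m. On a probability space, let g : Ω → ℝ^m be a random vector with E[g] = x and E‖g‖² ≤ (ω+1)‖x‖² for some ω ≥ 0, and let B : Ω → {0,1} be a Bernoulli random variable with ℙ(B = 1) = p ∈ (0, 1], independent of g. Define g_p = (B/p) · g. Then E[g_p] = x and E‖g_p‖² ≤ ((ω+1)/p) ‖x‖²; that is, g_p satisfies the compression-operator conditions with variance parameter ω_p = (ω+1)/p − 1. -/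
open MeasureTheory
open scoped BigOperators

noncomputable section

/-- the Bernoulli compressor is a compression operator with
variance parameter `ω_p = (ω+1)/p − 1`. -/
theorem bernoulli_compressor
    {m : ℕ} (Ω : Type*) [MeasurableSpace Ω] (ℙ : Measure Ω) [IsProbabilityMeasure ℙ]
    (x : Euc m) (ωc p : ℝ) (hωc : 0 ≤ ωc) (hp0 : 0 < p) (hp1 : p ≤ 1)
    (g : Ω → Euc m) (B : Ω → ℝ)
    (hgint : Integrable g ℙ)
    (hgsqint : Integrable (fun t => ‖g t‖ ^ 2) ℙ)
    (hgmean : (∫ t, g t ∂ℙ) = x)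
    (hgvar : (∫ t, ‖g t‖ ^ 2 ∂ℙ) ≤ (ωc + 1) * ‖x‖ ^ 2)
    (hB01 : ∀ t, B t = 0 ∨ B t = 1) (hBmeas : Measurable B)
    (hBp : ℙ {t | B t = 1} = ENNReal.ofReal p)
    (hindep : ProbabilityTheory.IndepFun g B ℙ) :
    (∫ t, (B t / p) • g t ∂ℙ) = x ∧
      (∫ t, ‖(B t / p) • g t‖ ^ 2 ∂ℙ) ≤ (ωc + 1) / p * ‖x‖ ^ 2 := by
  have hBabs : ∀ t, |B t| ≤ 1 := fun t => by rcases hB01 t with h | h <;> simp [h]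
  have hBint : Integrable B ℙ := by
    refine Integrable.mono' (integrable_const 1) hBmeas.aestronglyMeasurable ?_
    filter_upwards with t
    simpa [Real.norm_eq_abs] using hBabs t
  have hBset : MeasurableSet {t | B t = 1} := hBmeas (measurableSet_singleton 1)
  have hBmean : (∫ t, B t ∂ℙ) = p := by
    have hBeq : B = Set.indicator {t | B t = 1} (fun _ => (1 : ℝ)) := by
      funext t; rcases hB01 t with h | h <;> simp [Set.indicator, h]
    calc (∫ t, B t ∂ℙ) = ∫ t, Set.indicator {t | B t = 1} (fun _ => (1 : ℝ)) t ∂ℙ := by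
          rw [← hBeq]
      _ = (ℙ {t | B t = 1}).toReal • (1 : ℝ) := integral_indicator_const _ hBset
      _ = p := by rw [hBp, ENNReal.toReal_ofReal hp0.le]; simp
  set f : Ω → Euc m := fun t => (B t / p) • g t with hf
  have hfmeas : AEStronglyMeasurable f ℙ :=
    ((hBmeas.div_const p).aestronglyMeasurable).smul hgint.1
  have hfint : Integrable f ℙ := by
    refine Integrable.mono' (hgint.norm.const_mul p⁻¹) hfmeas ?_
    filter_upwards with t
    have hft : ‖f t‖ = |B t / p| * ‖g t‖ := by
      rw [norm_smul, Real.norm_eq_abs]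
    rw [hft, abs_div, abs_of_pos hp0]
    have h1 : |B t| / p ≤ 1 / p := by gcongr; exact hBabs t
    calc |B t| / p * ‖g t‖ ≤ 1 / p * ‖g t‖ :=
          mul_le_mul_of_nonneg_right h1 (norm_nonneg _)
      _ = p⁻¹ * ‖g t‖ := by rw [one_div]
  have hproj : ∀ (h : Ω → Euc m), Integrable h ℙ → ∀ i,
      (∫ t, h t ∂ℙ) i = ∫ t, h t i ∂ℙ := by
    intro h hh i
    have := (EuclideanSpace.proj i : Euc m →L[ℝ] ℝ).integral_comp_comm hh
    simpa [EuclideanSpace.proj] using this.symm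
  have hmean : (∫ t, f t ∂ℙ) = x := by
    ext i
    have hgi : Integrable (fun t => g t i) ℙ := by
      have := (EuclideanSpace.proj i : Euc m →L[ℝ] ℝ).integrable_comp hgint
      simpa [EuclideanSpace.proj] using this
    have hindi : ProbabilityTheory.IndepFun (fun t => g t i) B ℙ := by
      have : Measurable (fun v : Euc m => v i) :=
        (EuclideanSpace.proj i : Euc m →L[ℝ] ℝ).continuous.measurable
      exact hindep.comp this measurable_id
    have hmul : (∫ t, g t i * B t ∂ℙ) = (∫ t, g t i ∂ℙ) * ∫ t, B t ∂ℙ :=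
      hindi.integral_fun_mul_eq_mul_integral hgi.1 hBint.1
    have hcoord : (∫ t, f t ∂ℙ) i = ∫ t, (g t i * B t) / p ∂ℙ := by
      rw [hproj f hfint i]
      congr 1
      funext t
      rw [hf]
      simp [PiLp.smul_apply]
      ring
    rw [hcoord, integral_div, hmul, hBmean, ← hgmean, hproj g hgint i]
    field_simp
  refine ⟨hmean, ?_⟩
  have hsq : ∀ t, ‖f t‖ ^ 2 = B t * ‖g t‖ ^ 2 / p ^ 2 := by
    intro t
    have hB2 : B t ^ 2 = B t := by rcases hB01 t with h | h <;> simp [h]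
    have hft : ‖f t‖ ^ 2 = |B t / p| ^ 2 * ‖g t‖ ^ 2 := by
      rw [norm_smul, Real.norm_eq_abs, mul_pow]
    rw [hft, sq_abs, div_pow, hB2]
    ring
  have hindsq : ProbabilityTheory.IndepFun (fun t => ‖g t‖ ^ 2) B ℙ := by
    have : Measurable (fun v : Euc m => ‖v‖ ^ 2) := measurable_norm.pow_const 2
    exact hindep.comp this measurable_id
  have hmul2 : (∫ t, ‖g t‖ ^ 2 * B t ∂ℙ) = (∫ t, ‖g t‖ ^ 2 ∂ℙ) * ∫ t, B t ∂ℙ :=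
    hindsq.integral_fun_mul_eq_mul_integral hgsqint.1 hBint.1
  have heq : (∫ t, ‖f t‖ ^ 2 ∂ℙ) = (∫ t, ‖g t‖ ^ 2 ∂ℙ) / p := by
    calc (∫ t, ‖f t‖ ^ 2 ∂ℙ) = ∫ t, ‖g t‖ ^ 2 * B t / p ^ 2 ∂ℙ := by
          congr 1; funext t; rw [hsq t]; ring
      _ = (∫ t, ‖g t‖ ^ 2 * B t ∂ℙ) / p ^ 2 := integral_div _ _
      _ = (∫ t, ‖g t‖ ^ 2 ∂ℙ) * p / p ^ 2 := by rw [hmul2, hBmean]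
      _ = (∫ t, ‖g t‖ ^ 2 ∂ℙ) / p := by field_simp
  rw [show (fun t => ‖(B t / p) • g t‖ ^ 2) = fun t => ‖f t‖ ^ 2 from rfl] at *
  rw [heq, div_mul_eq_mul_div, div_le_div_iff_of_pos_right hp0] at *
  exact hgvar
end
end
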